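/- Spherical reduction of the rigid-body optimal control equations: Suppose I_xx = I_yy = I_zz = I > 0 (so η₃₂ = η₁₃ = η₂₁ = 0, 𝕀 = I·Id, Π = Iω). Then for any C³ curve ω : ℝ → ℝ³, the vector expression κ = Π × Π̇ + Π × (ω × Π) − Π̈ − 𝕀 · ( 2 ω × Π̇ + ω̇ × Π + ω × (ω × Π) ) reduces to κ = −Π̈ = −I ω̈, the quantity λ = κ + Π̈ vanishes identically, and the equation κ̇ = κ × ω is equivalent to ω⃛ = ω̈ × ω. -/

import Mathlib

open Matrix Real

noncomputable section

/-- **Spherical reduction of the rigid-body optimal control equations.**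
If `I_xx = I_yy = I_zz = I > 0` (so `𝕀 = I·Id`, `Π = Iω`), then the κ-vector
`κ = Π × Π̇ + Π × (ω × Π) − Π̈ − 𝕀·(2 ω × Π̇ + ω̇ × Π + ω × (ω × Π))`
reduces to `κ = −Π̈ = −I ω̈`, the quantity `λ = κ + Π̈` vanishes identically,
and `κ̇ = κ × ω` is equivalent to `ω⃛ = ω̈ × ω`. -/
theorem spherical_rigid_body_reduction (I : ℝ) (hI : 0 < I)
    (ω : ℝ → Fin 3 → ℝ) (hω : ContDiff ℝ 3 ω)
    (Pm : ℝ → Fin 3 → ℝ)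
    (hPm : ∀ t, Pm t = Matrix.diagonal ![I, I, I] *ᵥ ω t)
    (κ : ℝ → Fin 3 → ℝ)
    (hκ : ∀ t, κ t
      = Pm t ⨯₃ deriv Pm t + Pm t ⨯₃ (ω t ⨯₃ Pm t) - deriv (deriv Pm) t
        - Matrix.diagonal ![I, I, I] *ᵥ
            ((2 : ℝ) • (ω t ⨯₃ deriv Pm t) + deriv ω t ⨯₃ Pm t + ω t ⨯₃ (ω t ⨯₃ Pm t)))
    (lam : ℝ → Fin 3 → ℝ)
    (hlam : ∀ t, lam t = κ t + deriv (deriv Pm) t) :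
    (∀ t, κ t = -deriv (deriv Pm) t ∧ κ t = -(I • deriv (deriv ω) t)) ∧
    (∀ t, lam t = 0) ∧
    ((∀ t, deriv κ t = κ t ⨯₃ ω t) ↔
      (∀ t, deriv (deriv (deriv ω)) t = deriv (deriv ω) t ⨯₃ ω t)) := by
  have hsmul : ∀ v : Fin 3 → ℝ, Matrix.diagonal ![I, I, I] *ᵥ v = I • v := by
    intro v; funext i; fin_cases i <;> simp [Matrix.mulVec_diagonal]
  have hPm' : Pm = fun t => I • ω t := funext fun t => by rw [hPm, hsmul]
  have hωd : Differentiable ℝ ω := hω.differentiable (by norm_num)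
  have hω1 : ContDiff ℝ 2 (deriv ω) := by
    exact (contDiff_succ_iff_deriv.mp (show ContDiff ℝ (2+1) ω from hω)).2.2
  have hω1d : Differentiable ℝ (deriv ω) := hω1.differentiable (by norm_num)
  have hω2 : ContDiff ℝ 1 (deriv (deriv ω)) := by
    exact (contDiff_succ_iff_deriv.mp (show ContDiff ℝ (1+1) (deriv ω) from hω1)).2.2
  have hω2d : Differentiable ℝ (deriv (deriv ω)) := hω2.differentiable (by norm_num)
  have hd1 : deriv Pm = fun t => I • deriv ω t := by
    rw [hPm']; funext t; exact deriv_fun_const_smul _ (hωd t)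
  have hd2 : deriv (deriv Pm) = fun t => I • deriv (deriv ω) t := by
    rw [hd1]; funext t; exact deriv_fun_const_smul _ (hω1d t)
  have hκ' : ∀ t, κ t = -(I • deriv (deriv ω) t) := by
    intro t
    rw [hκ t, hd2, hd1]
    simp only [hPm, hsmul]
    funext i
    fin_cases i <;> simp [cross_apply, Matrix.vecHead, Matrix.vecTail, Function.comp, Pi.smul_apply, smul_eq_mul] <;> ring
  have key : ∀ t, κ t = -deriv (deriv Pm) t := by
    intro t; rw [hκ' t, hd2]
  refine ⟨fun t => ⟨key t, hκ' t⟩, fun t => by rw [hlam t, key t]; simp, ?_⟩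
  have hκfun : κ = fun t => -(I • deriv (deriv ω) t) := funext hκ'
  have hdκ : deriv κ = fun t => -(I • deriv (deriv (deriv ω)) t) := by
    rw [hκfun]; funext t
    rw [deriv.fun_neg]
    congr 1
    exact deriv_fun_const_smul _ (hω2d t)
  constructor
  · intro h t
    have := h t
    simp only [hdκ, hκ' t] at this
    have h2 : -(I • deriv (deriv (deriv ω)) t) = -(I • (deriv (deriv ω) t ⨯₃ ω t)) := by
      rw [this]; funext i; fin_cases i <;> simp [cross_apply, Matrix.vecHead, Matrix.vecTail, Function.comp, Pi.smul_apply, smul_eq_mul] <;> ring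
    have := neg_injective h2
    exact smul_right_injective _ (ne_of_gt hI) this
  · intro h t
    simp only [hdκ, hκ' t, h t]
    funext i; fin_cases i <;> simp [cross_apply, Matrix.vecHead, Matrix.vecTail, Function.comp, Pi.smul_apply, smul_eq_mul] <;> ring

end
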